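/- arXiv:1706.04801 — 2 statements merged into one kernel-verified Lean document; each statement's English description precedes it below -/
import Mathlib

section
/- Let K be a finite field of odd characteristic and let α ∈ K((T)) admit a continued fraction datum (αₙ, aₙ). Assume α is quadratic over the rational function field: there exist u, v, w ∈ K[X] with u ≠ 0 and ι u·α² + ι v·α + ι w = 0. Then the continued fraction of α is periodic: there exist n ≥ 0 and ℓ ≥ 1 with αₙ = αₙ₊ℓ. -/
open Polynomial

/-- The ring homomorphism `K[X] → K((T))` sending `X` to `T⁻¹`. -/
noncomputable def iota {K : Type*} [Field K] : Polynomial K →+* LaurentSeries K :=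
  Polynomial.eval₂RingHom (HahnSeries.C : K →+* LaurentSeries K)
    (HahnSeries.single (-1 : ℤ) (1 : K))

section CFAux
variable {K : Type*} [Field K]

lemma iota_C (c : K) : iota (C c) = HahnSeries.C c := by simp [iota]

lemma iota_X : iota (X : K[X]) = HahnSeries.single (-1 : ℤ) 1 := by simp [iota]

lemma iota_C_mul_X_pow (c : K) (d : ℕ) :
    iota (C c * X ^ d) = HahnSeries.single (-(d : ℤ)) c := by
  rw [map_mul, map_pow, iota_C, iota_X, HahnSeries.single_pow, HahnSeries.C]
  simp [HahnSeries.single_mul_single]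

lemma orderTop_iota : ∀ {f : K[X]}, f ≠ 0 → (iota f).orderTop = (-(f.natDegree : ℤ) : ℤ) := by
  suffices H : ∀ (N : ℕ) (f : K[X]), f.natDegree ≤ N → f ≠ 0 →
      (iota f).orderTop = (-(f.natDegree : ℤ) : ℤ) by
    intro f hf; exact H f.natDegree f le_rfl hf
  intro N
  induction N with
  | zero =>
    intro f hdeg hf
    have : f = C (f.coeff 0) := Polynomial.eq_C_of_natDegree_eq_zero (Nat.le_zero.mp hdeg)
    rw [Nat.le_zero.mp hdeg]
    rw [this, iota_C]
    have h0 : f.coeff 0 ≠ 0 := by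
      intro h; rw [h, map_zero] at this; exact hf this
    rw [HahnSeries.C]
    exact (HahnSeries.orderTop_single h0).trans (by simp)
  | succ N ih =>
    intro f hdeg hf
    by_cases hE : f.eraseLead = 0
    · have hfe : f = C f.leadingCoeff * X ^ f.natDegree := by
        conv_lhs => rw [← Polynomial.eraseLead_add_C_mul_X_pow f]
        rw [hE, zero_add]
      rw [hfe, iota_C_mul_X_pow]
      rw [HahnSeries.orderTop_single (by simpa [leadingCoeff_eq_zero] using hf)]
      congr 1
      rw [← hfe]
    · by_cases hd : f.natDegree ≤ N
      · exact ih f hd hf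
      have hdN : f.natDegree = N + 1 := le_antisymm hdeg (not_le.mp hd)
      have h1 : 1 ≤ f.natDegree := by omega
      have hEd : f.eraseLead.natDegree < f.natDegree := by
        rcases f.eraseLead_natDegree_lt_or_eraseLead_eq_zero with h | h
        · exact h
        · exact absurd h hE
      have hEo : (iota f.eraseLead).orderTop = (-(f.eraseLead.natDegree : ℤ) : ℤ) :=
        ih f.eraseLead (by omega) hE
      have key : iota f = HahnSeries.single (-(f.natDegree : ℤ)) f.leadingCoeff
          + iota f.eraseLead := by
        conv_lhs => rw [← Polynomial.eraseLead_add_C_mul_X_pow f]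
        rw [map_add, iota_C_mul_X_pow, add_comm]
      rw [key, HahnSeries.orderTop_add_eq_left]
      · exact HahnSeries.orderTop_single (by simpa [leadingCoeff_eq_zero] using hf)
      · rw [HahnSeries.orderTop_single (by simpa [leadingCoeff_eq_zero] using hf), hEo]
        norm_cast
        omega

lemma iota_ne_zero {f : K[X]} (hf : f ≠ 0) : iota f ≠ 0 := by
  rw [← HahnSeries.orderTop_ne_top, orderTop_iota hf]
  exact WithTop.coe_ne_top

lemma order_iota {f : K[X]} (hf : f ≠ 0) : (iota f).order = -(f.natDegree : ℤ) := by
  have h := HahnSeries.order_eq_orderTop_of_ne_zero (iota_ne_zero hf)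
  rw [orderTop_iota hf] at h
  exact_mod_cast h

lemma cf_step {A : ℕ → LaurentSeries K} {a : ℕ → K[X]}
    (hfrac : ∀ n, 0 < (A n - iota (a n)).orderTop ∧ A (n + 1) * (A n - iota (a n)) = 1)
    {m : ℕ} {p q : K[X]} (hq : q ≠ 0) (heq : A m * iota q = iota p) :
    ∃ r : K[X], r ≠ 0 ∧ r.natDegree < q.natDegree ∧ A (m+1) * iota r = iota q := by
  obtain ⟨hot, hmul⟩ := hfrac m
  have hd0 : A m - iota (a m) ≠ 0 := right_ne_zero_of_mul_eq_one hmul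
  have hA1 : A (m+1) ≠ 0 := left_ne_zero_of_mul_eq_one hmul
  set r := p - a m * q with hr
  have h1 : (A m - iota (a m)) * iota q = iota r := by
    rw [hr, map_sub, map_mul, sub_mul, heq]
  have hr0 : r ≠ 0 := by
    intro h
    rw [h, map_zero] at h1
    exact (mul_ne_zero hd0 (iota_ne_zero hq)) h1
  have hordd : 1 ≤ (A m - iota (a m)).order :=
    (HahnSeries.zero_lt_orderTop_iff hd0).mp hot
  have hordeq := congrArg HahnSeries.order h1
  rw [HahnSeries.order_mul hd0 (iota_ne_zero hq), order_iota hq, order_iota hr0] at hordeq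
  have hlt : r.natDegree < q.natDegree := by omega
  refine ⟨r, hr0, hlt, ?_⟩
  have h2 : A (m+1) * iota r = (A (m+1) * (A m - iota (a m))) * iota q := by
    rw [← h1]; ring
  rw [h2, hmul, one_mul]

lemma no_rational {A : ℕ → LaurentSeries K} {a : ℕ → K[X]}
    (hfrac : ∀ n, 0 < (A n - iota (a n)).orderTop ∧ A (n + 1) * (A n - iota (a n)) = 1)
    (m : ℕ) (p q : K[X]) (hq : q ≠ 0) (heq : A m * iota q = iota p) : False := by
  have H : ∀ (N : ℕ) (m : ℕ) (p q : K[X]), q ≠ 0 → q.natDegree ≤ N →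
      A m * iota q = iota p → False := by
    intro N
    induction N with
    | zero =>
      intro m p q hq hdeg heq
      obtain ⟨r, hr0, hlt, _⟩ := cf_step hfrac hq heq
      omega
    | succ N ih =>
      intro m p q hq hdeg heq
      obtain ⟨r, hr0, hlt, hnext⟩ := cf_step hfrac hq heq
      exact ih (m+1) q r hr0 (by omega) hnext
  exact H q.natDegree m p q hq le_rfl heq

/-- order of a sum when the left orderTop is smaller -/
lemma order_add_eq_left' {x y : LaurentSeries K} (hx : x ≠ 0)
    (h : (x.order : WithTop ℤ) < y.orderTop) : (x + y) ≠ 0 ∧ (x + y).order = x.order := by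
  have hox : x.orderTop = (x.order : WithTop ℤ) := (HahnSeries.order_eq_orderTop_of_ne_zero hx).symm
  have hsum : (x + y).orderTop = x.orderTop := HahnSeries.orderTop_add_eq_left (by rw [hox]; exact h)
  have hne : (x + y) ≠ 0 := by
    rw [← HahnSeries.orderTop_ne_top, hsum, hox]; exact WithTop.coe_ne_top
  refine ⟨hne, ?_⟩
  have := HahnSeries.order_eq_orderTop_of_ne_zero hne
  rw [hsum, hox] at this
  exact_mod_cast this

noncomputable def cfT (u v w : K[X]) (a : ℕ → K[X]) : ℕ → K[X] × K[X] × K[X]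
  | 0 => (u, v, w)
  | n+1 => ((cfT u v w a n).1 * (a n)^2 + (cfT u v w a n).2.1 * (a n) + (cfT u v w a n).2.2,
            2 * (cfT u v w a n).1 * (a n) + (cfT u v w a n).2.1,
            (cfT u v w a n).1)
end CFAux

set_option maxHeartbeats 1600000 in
/-- Over a finite field of odd characteristic, the continued fraction of any Laurent series
that is quadratic over the rational function field is periodic. -/
theorem quadratic_cf_periodic_over_finite_field {K : Type*} [Field K] [Fintype K]
    (h2 : (2 : K) ≠ 0)
    (α : LaurentSeries K)
    (A : ℕ → LaurentSeries K) (a : ℕ → Polynomial K)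
    (h0 : A 0 = α)
    (hfrac : ∀ n, 0 < (A n - iota (a n)).orderTop ∧ A (n + 1) * (A n - iota (a n)) = 1)
    (u v w : Polynomial K) (hu : u ≠ 0)
    (hquad : iota u * α ^ 2 + iota v * α + iota w = 0) :
    ∃ n ℓ : ℕ, 1 ≤ ℓ ∧ A n = A (n + ℓ) := by
  -- basic nonzeroness
  have h2F : (2 : LaurentSeries K) ≠ 0 := by
    have := HahnSeries.C_ne_zero (Γ := ℤ) h2
    simpa [map_ofNat] using this
  have h2P : (2 : K[X]) ≠ 0 := by
    have := (Polynomial.C_ne_zero (a := (2:K))).mpr h2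
    simpa [map_ofNat] using this
  -- the square root of the discriminant
  set δ : LaurentSeries K := 2 * iota u * α + iota v with hδdef
  have hδ : ∀ g : K[X], δ ≠ iota g := by
    intro g hg
    refine no_rational hfrac 0 (g - v) (2 * u) (mul_ne_zero h2P hu) ?_
    rw [h0, map_sub, map_mul]
    simp only [map_ofNat]
    linear_combination hg
  have hδ0 : δ ≠ 0 := fun h => hδ 0 (by simpa using h)
  have h4F : (4 : LaurentSeries K) ≠ 0 := by
    have h42 : (4 : LaurentSeries K) = 2 * 2 := by norm_num
    rw [h42]; exact mul_ne_zero h2F h2F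
  -- sign sequence
  set ε : ℕ → LaurentSeries K := fun n => (-1 : LaurentSeries K) ^ n with hεdef
  have hεsucc : ∀ n, ε (n+1) = -(ε n) := by
    intro n
    show (-1 : LaurentSeries K) ^ (n+1) = -((-1) ^ n)
    rw [pow_succ]; ring
  have hεcases : ∀ n, ε n = 1 ∨ ε n = -1 := by
    intro n
    induction n with
    | zero => exact Or.inl (pow_zero _)
    | succ n ih =>
      rcases ih with h | h
      · exact Or.inr (by rw [hεsucc n, h])
      · exact Or.inl (by rw [hεsucc n, h, neg_neg])
  have hε2 : ∀ n, ε n * ε n = 1 := by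
    intro n; rcases hεcases n with h | h <;> rw [h] <;> ring
  have hεne : ∀ n, ε n ≠ 0 := by
    intro n h
    rcases hεcases n with he | he <;> rw [he] at h
    · exact one_ne_zero h
    · exact one_ne_zero (neg_eq_zero.mp h)
  have hεord : ∀ n, (ε n).order = 0 := fun n => by
    rcases hεcases n with h | h <;> rw [h]
    · exact HahnSeries.order_one
    · rw [show (-1 : LaurentSeries K) = -(1) from rfl, HahnSeries.order_neg]
      exact HahnSeries.order_one
  -- the triple sequence
  set U : ℕ → K[X] := fun n => (cfT u v w a n).1 with hUdef
  set V : ℕ → K[X] := fun n => (cfT u v w a n).2.1 with hVdef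
  set W : ℕ → K[X] := fun n => (cfT u v w a n).2.2 with hWdef
  have hU0 : U 0 = u := rfl
  have hV0 : V 0 = v := rfl
  have hW0 : W 0 = w := rfl
  have hUs : ∀ n, U (n+1) = U n * (a n)^2 + V n * a n + W n := fun n => rfl
  have hVs : ∀ n, V (n+1) = 2 * U n * a n + V n := fun n => rfl
  have hWs : ∀ n, W (n+1) = U n := fun n => rfl
  -- discriminant invariance
  have I3 : ∀ n, (iota (V n))^2 = 4 * iota (U n) * iota (W n) + δ^2 := by
    intro n
    induction n with
    | zero =>
      rw [hU0, hV0, hW0, hδdef]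
      linear_combination (-(4:LaurentSeries K)) * iota u * hquad
    | succ n ih =>
      rw [hUs n, hVs n, hWs n]
      simp only [map_add, map_mul, map_pow, map_ofNat]
      linear_combination ih
  -- U n ≠ 0
  have I1 : ∀ n, U n ≠ 0 := by
    intro n
    induction n with
    | zero => exact hu
    | succ n ih =>
      intro h
      have h3 := I3 (n+1)
      rw [h, map_zero] at h3
      have : (iota (V (n+1)) - δ) * (iota (V (n+1)) + δ) = 0 := by linear_combination h3
      rcases mul_eq_zero.mp this with h' | h'
      · exact hδ (V (n+1)) (by linear_combination -h')
      · exact hδ (-(V (n+1))) (by rw [map_neg]; linear_combination h')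
  have hι : ∀ n, iota (U n) ≠ 0 := fun n => iota_ne_zero (I1 n)
  have hden : ∀ n, 2 * iota (U n) ≠ 0 := fun n => mul_ne_zero h2F (hι n)
  have h5 : ∀ n, iota (V (n+1)) = 2 * iota (U n) * iota (a n) + iota (V n) := fun n => by
    rw [hVs n]; simp only [map_add, map_mul, map_ofNat]
  have h3' : ∀ n, (iota (V (n+1)))^2 = 4 * iota (U (n+1)) * iota (U n) + δ^2 := fun n => by
    have := I3 (n+1); rwa [hWs n] at this
  -- nonzero facts from hfrac
  have hdiff0 : ∀ n, A n - iota (a n) ≠ 0 := fun n => right_ne_zero_of_mul_eq_one (hfrac n).2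
  have hA0 : ∀ n, A (n+1) ≠ 0 := fun n => left_ne_zero_of_mul_eq_one (hfrac n).2
  have horddiff : ∀ n, 1 ≤ (A n - iota (a n)).order := fun n =>
    (HahnSeries.zero_lt_orderTop_iff (hdiff0 n)).mp (hfrac n).1
  have hordA : ∀ n, (A (n+1)).order ≤ -1 := by
    intro n
    have := congrArg HahnSeries.order (hfrac n).2
    rw [HahnSeries.order_mul (hA0 n) (hdiff0 n), HahnSeries.order_one] at this
    have := horddiff n
    omega
  -- the key invariant
  have I2 : ∀ n, 2 * iota (U n) * A n + iota (V n) = ε n * δ := by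
    intro n
    induction n with
    | zero =>
      rw [hU0, hV0, h0, hεdef]
      simp only [pow_zero, one_mul]
      exact hδdef.symm
    | succ n ih =>
      have hmul := (hfrac n).2
      have key : (2 * iota (U (n+1)) * A (n+1) + iota (V (n+1)) + ε n * δ) *
          ((A n - iota (a n)) * (2 * iota (U n))) = 0 := by
        linear_combination (4 * iota (U n) * iota (U (n+1))) * hmul
          + (iota (V (n+1)) + ε n * δ) * ih
          + (iota (V (n+1)) + ε n * δ) * (h5 n)
          + δ^2 * (hε2 n) - h3' n
      rcases mul_eq_zero.mp key with h | h
      · rw [hεsucc n]; linear_combination h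
      · exact absurd h (mul_ne_zero (hdiff0 n) (hden n))
  -- the conjugate sequence
  set β : ℕ → LaurentSeries K := fun n => (-(ε n) * δ - iota (V n)) / (2 * iota (U n)) with hβdef
  have hβmul : ∀ n, 2 * iota (U n) * β n + iota (V n) = -(ε n) * δ := by
    intro n
    have hc : β n * (2 * iota (U n)) = -(ε n) * δ - iota (V n) := div_mul_cancel₀ _ (hden n)
    linear_combination hc
  have hβ0 : ∀ n, β n ≠ 0 := by
    intro n h
    have hthis := hβmul n
    rw [h, mul_zero, zero_add] at hthis
    rcases hεcases n with hε | hε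
    · exact hδ (-(V n)) (by rw [map_neg]; linear_combination hthis - δ * hε)
    · exact hδ (V n) (by linear_combination -hthis + δ * hε)
  have hβA : ∀ n, (A n - β n) * (2 * iota (U n)) = 2 * (ε n * δ) := fun n => by
    linear_combination I2 n - hβmul n
  have hβAne : ∀ n, A n - β n ≠ 0 := by
    intro n h
    have := hβA n
    rw [h, zero_mul] at this
    exact (mul_ne_zero h2F (mul_ne_zero (hεne n) hδ0)) this.symm
  have hβdiffne : ∀ n, β n - iota (a n) ≠ 0 := by
    intro n h
    have h1 := hβmul n
    have hV1 : iota (V (n+1)) = -(ε n) * δ := by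
      rw [h5 n]; linear_combination h1 - (2 * iota (U n)) * h
    rcases hεcases n with hε | hε
    · exact hδ (-(V (n+1))) (by rw [map_neg]; linear_combination hV1 - δ * hε)
    · exact hδ (V (n+1)) (by linear_combination -hV1 + δ * hε)
  have hβstep : ∀ n, β (n+1) * (β n - iota (a n)) = 1 := by
    intro n
    have e1 : 2 * iota (U n) * (β n - iota (a n)) = -(ε n) * δ - iota (V (n+1)) := by
      linear_combination hβmul n + h5 n
    have e2 : 2 * iota (U (n+1)) * β (n+1) = ε n * δ - iota (V (n+1)) := by
      have := hβmul (n+1)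
      rw [hεsucc n] at this
      linear_combination this
    have key : (β (n+1) * (β n - iota (a n)) - 1) * (4 * iota (U (n+1)) * iota (U n)) = 0 := by
      linear_combination (2 * iota (U n) * (β n - iota (a n))) * e2
        + (ε n * δ - iota (V (n+1))) * e1 + h3' n - δ^2 * (hε2 n)
    rcases mul_eq_zero.mp key with h | h
    · linear_combination h
    · exact absurd h (mul_ne_zero (mul_ne_zero h4F (hι (n+1))) (hι n))
  -- parity characterisation of ε
  have hεiff : ∀ n, (ε n = 1 ↔ Even n) := by
    intro n
    induction n with
    | zero =>
      constructor
      · intro _; exact Even.zero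
      · intro _; show (-1 : LaurentSeries K) ^ 0 = 1; exact pow_zero _
    | succ n ih =>
      rw [hεsucc n, Nat.even_add_one, ← ih]
      constructor
      · intro h h1
        rw [h1] at h
        exact h2F (by linear_combination -h)
      · intro h
        rcases hεcases n with h1 | h1
        · exact absurd h1 h
        · rw [h1, neg_neg]
  have hεodd' : ∀ n, ¬ Even n → ε n = -1 := fun n h =>
    (hεcases n).resolve_left (fun h1 => h ((hεiff n).mp h1))
  -- order bookkeeping
  have hord2 : (2 : LaurentSeries K).order = 0 := by
    have h := order_iota h2P
    rw [map_ofNat] at h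
    simpa using h
  have hordβstep : ∀ n, (β (n+1)).order + (β n - iota (a n)).order = 0 := by
    intro n
    have h := congrArg HahnSeries.order (hβstep n)
    rwa [HahnSeries.order_mul (hβ0 (n+1)) (hβdiffne n), HahnSeries.order_one] at h
  have hτ : ∀ n, (A n - β n).order = δ.order + (U n).natDegree := by
    intro n
    have h := congrArg HahnSeries.order (hβA n)
    rw [HahnSeries.order_mul (hβAne n) (hden n),
        HahnSeries.order_mul h2F (hι n),
        HahnSeries.order_mul h2F (mul_ne_zero (hεne n) hδ0),
        HahnSeries.order_mul (hεne n) hδ0, hεord n, order_iota (I1 n), hord2] at h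
    omega
  have hτrec : ∀ n, (A (n+1) - β (n+1)).order
      = (A n - β n).order + (A (n+1)).order + (β (n+1)).order := by
    intro n
    have hid : (A n - β n) * A (n+1) * β (n+1) = β (n+1) - A (n+1) := by
      linear_combination (β (n+1)) * (hfrac n).2 - (A (n+1)) * hβstep n
    have h := congrArg HahnSeries.order hid
    rw [HahnSeries.order_mul (mul_ne_zero (hβAne n) (hA0 n)) (hβ0 (n+1)),
        HahnSeries.order_mul (hβAne n) (hA0 n),
        show β (n+1) - A (n+1) = -(A (n+1) - β (n+1)) by ring, HahnSeries.order_neg] at h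
    omega
  -- the polynomial parts aₙ (n ≥ 1) are nonconstant
  have hia : ∀ m, iota (a (m+1)) ≠ 0 ∧ (iota (a (m+1))).order ≤ -1 := by
    intro m
    have hA := hordA m
    have hyo : ((1:ℤ) : WithTop ℤ) ≤ (-(A (m+1) - iota (a (m+1)))).orderTop := by
      rw [HahnSeries.orderTop_neg, ← HahnSeries.order_eq_orderTop_of_ne_zero (hdiff0 (m+1))]
      exact_mod_cast horddiff (m+1)
    have hxlt : ((A (m+1)).order : WithTop ℤ) < ((1:ℤ) : WithTop ℤ) := by
      exact_mod_cast (by omega : (A (m+1)).order < 1)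
    have hres := order_add_eq_left' (hA0 m) (lt_of_lt_of_le hxlt hyo)
    rw [show A (m+1) + -(A (m+1) - iota (a (m+1))) = iota (a (m+1)) by ring] at hres
    exact ⟨hres.1, by omega⟩
  -- existence and persistence of the reduced region
  have hred : ∃ N, 1 ≤ N ∧ ∀ n, N ≤ n → 1 ≤ (β n).order := by
    have hexist : ∃ n, 1 ≤ n ∧ 1 ≤ (β n).order := by
      by_contra hcon
      push_neg at hcon
      have hdec : ∀ n, (A (n+1) - β (n+1)).order ≤ (A n - β n).order - 1 := by
        intro n
        have h1 := hτrec n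
        have h2 := hordA n
        have h3 := hcon (n+1) (by omega)
        omega
      have hlow : ∀ n, δ.order ≤ (A n - β n).order := by
        intro n
        have h1 := hτ n
        have h2 : (0:ℤ) ≤ ((U n).natDegree : ℤ) := Int.natCast_nonneg _
        omega
      have hiter : ∀ k : ℕ, (A k - β k).order ≤ (A 0 - β 0).order - k := by
        intro k
        induction k with
        | zero => simp
        | succ k ih =>
          have := hdec k
          push_cast
          push_cast at ih
          omega
      have hbad := hiter ((A 0 - β 0).order - δ.order + 1).toNat
      have hlow' := hlow ((A 0 - β 0).order - δ.order + 1).toNat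
      have := Int.self_le_toNat ((A 0 - β 0).order - δ.order + 1)
      omega
    obtain ⟨N, hN1, hNred⟩ := hexist
    refine ⟨N, hN1, ?_⟩
    intro n hn
    induction n with
    | zero => omega
    | succ n ih =>
      rcases Nat.lt_or_ge n N with h | h
      · have : n + 1 = N := by omega
        rw [this]; exact hNred
      · have hβn := ih h
        obtain ⟨m, rfl⟩ : ∃ m, n = m + 1 := ⟨n - 1, by omega⟩
        have hian := hia m
        -- order (β (m+1) - iota (a (m+1))) = order (iota (a (m+1)))
        have hyo : ((β (m+1)).order : WithTop ℤ) ≤ (β (m+1)).orderTop :=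
          le_of_eq (HahnSeries.order_eq_orderTop_of_ne_zero (hβ0 (m+1)))
        have hxlt : (((-(iota (a (m+1)))).order : WithTop ℤ)) < ((β (m+1)).order : WithTop ℤ) := by
          rw [HahnSeries.order_neg]
          exact_mod_cast (by omega : (iota (a (m+1))).order < (β (m+1)).order)
        have hres := order_add_eq_left' (neg_ne_zero.mpr hian.1) (lt_of_lt_of_le hxlt hyo)
        rw [show -(iota (a (m+1))) + β (m+1) = β (m+1) - iota (a (m+1)) by ring] at hres
        have hst := hordβstep (m+1)
        rw [hres.2, HahnSeries.order_neg] at hst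
        have := hian.2
        omega
  obtain ⟨N, hN1, hNred⟩ := hred
  -- degree bounds in the reduced region
  have hbound : ∀ n, N ≤ n → ((U n).natDegree : ℤ) ≤ -1 - δ.order
      ∧ ((V n).natDegree : ℤ) ≤ -δ.order := by
    intro n hn
    have hβord := hNred n hn
    obtain ⟨m, rfl⟩ : ∃ m, n = m + 1 := ⟨n - 1, by omega⟩
    have hAo := hordA m
    have hAne := hA0 m
    -- order (A n - β n) = order (A n)
    have hyo : ((β (m+1)).order : WithTop ℤ) ≤ ((-(β (m+1))).orderTop) := by
      rw [HahnSeries.orderTop_neg]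
      exact le_of_eq (HahnSeries.order_eq_orderTop_of_ne_zero (hβ0 (m+1)))
    have hxlt : (((A (m+1)).order : WithTop ℤ)) < ((β (m+1)).order : WithTop ℤ) := by
      exact_mod_cast (by omega : (A (m+1)).order < (β (m+1)).order)
    have hres := order_add_eq_left' hAne (lt_of_lt_of_le hxlt hyo)
    rw [show A (m+1) + -(β (m+1)) = A (m+1) - β (m+1) by ring] at hres
    have hτn := hτ (m+1)
    have hUb : ((U (m+1)).natDegree : ℤ) ≤ -1 - δ.order := by omega
    refine ⟨hUb, ?_⟩
    by_cases hVz : V (m+1) = 0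
    · have h2' : (0:ℤ) ≤ ((U (m+1)).natDegree : ℤ) := Int.natCast_nonneg _
      rw [hVz]
      simp only [natDegree_zero, Nat.cast_zero]
      omega
    · have hsum_ne : A (m+1) + β (m+1) ≠ 0 := by
        intro hzz
        have h2V : (2 : LaurentSeries K) * iota (V (m+1)) = 0 := by
          linear_combination I2 (m+1) + hβmul (m+1) - 2 * iota (U (m+1)) * hzz
        exact iota_ne_zero hVz ((mul_eq_zero.mp h2V).resolve_left h2F)
      have heqV : iota (V (m+1)) * (-2) = (A (m+1) + β (m+1)) * (2 * iota (U (m+1))) := by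
        linear_combination -(I2 (m+1)) - hβmul (m+1)
      have hneg2 : (-2 : LaurentSeries K) ≠ 0 := neg_ne_zero.mpr h2F
      have hordneg2 : (-2 : LaurentSeries K).order = 0 := by
        rw [show (-2 : LaurentSeries K) = -(2) by norm_num, HahnSeries.order_neg, hord2]
      have horder := congrArg HahnSeries.order heqV
      rw [HahnSeries.order_mul (iota_ne_zero hVz) hneg2,
          HahnSeries.order_mul hsum_ne (hden (m+1)),
          HahnSeries.order_mul h2F (hι (m+1)),
          order_iota hVz, order_iota (I1 (m+1)), hordneg2, hord2] at horder
      have hmin : min (A (m+1)).order (β (m+1)).order ≤ (A (m+1) + β (m+1)).order :=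
        HahnSeries.min_order_le_order_add hsum_ne
      have hmineq : min (A (m+1)).order (β (m+1)).order = (A (m+1)).order :=
        min_eq_left (by omega)
      rw [hmineq] at hmin
      omega
  have hδneg : δ.order ≤ -1 := by
    have h1 := (hbound N le_rfl).1
    have h2 : (0:ℤ) ≤ ((U N).natDegree : ℤ) := Int.natCast_nonneg _
    omega
  set B : ℕ := (-δ.order).toNat with hBdef
  have hboundNat : ∀ n, N ≤ n → (U n).natDegree ≤ B ∧ (V n).natDegree ≤ B := by
    intro n hn
    have h1 := (hbound n hn).1
    have h2 := (hbound n hn).2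
    have h3 : (B : ℤ) = -δ.order := Int.toNat_of_nonneg (by omega)
    omega
  -- pigeonhole
  classical
  suffices Hs : ∀ k l : ℕ, k < l →
      (fun i : Fin (B+1) => (U (N+k)).coeff i) = (fun i : Fin (B+1) => (U (N+l)).coeff i) →
      (fun i : Fin (B+1) => (V (N+k)).coeff i) = (fun i : Fin (B+1) => (V (N+l)).coeff i) →
      decide (Even (N+k)) = decide (Even (N+l)) →
      ∃ n ℓ : ℕ, 1 ≤ ℓ ∧ A n = A (n + ℓ) by
    obtain ⟨k, l, hkl, hG⟩ := Finite.exists_ne_map_eq_of_infinite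
      (fun k => ((fun i : Fin (B+1) => (U (N+k)).coeff i, fun i : Fin (B+1) => (V (N+k)).coeff i,
        decide (Even (N+k))) : (Fin (B+1) → K) × (Fin (B+1) → K) × Bool))
    simp only [Prod.mk.injEq] at hG
    rcases lt_or_gt_of_ne hkl with h | h
    · exact Hs k l h hG.1 hG.2.1 hG.2.2
    · exact Hs l k h hG.1.symm hG.2.1.symm hG.2.2.symm
  intro k l hkl hGU hGV hGb
  have hUeq : U (N+k) = U (N+l) := by
    apply Polynomial.ext
    intro i
    by_cases hi : i < B + 1
    · exact congrFun hGU ⟨i, hi⟩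
    · rw [Polynomial.coeff_eq_zero_of_natDegree_lt
          (by have := (hboundNat (N+k) (by omega)).1; omega),
        Polynomial.coeff_eq_zero_of_natDegree_lt
          (by have := (hboundNat (N+l) (by omega)).1; omega)]
  have hVeq : V (N+k) = V (N+l) := by
    apply Polynomial.ext
    intro i
    by_cases hi : i < B + 1
    · exact congrFun hGV ⟨i, hi⟩
    · rw [Polynomial.coeff_eq_zero_of_natDegree_lt
          (by have := (hboundNat (N+k) (by omega)).2; omega),
        Polynomial.coeff_eq_zero_of_natDegree_lt
          (by have := (hboundNat (N+l) (by omega)).2; omega)]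
  have hεeq : ε (N+k) = ε (N+l) := by
    have hbool : Even (N+k) ↔ Even (N+l) := decide_eq_decide.mp hGb
    by_cases he : Even (N+k)
    · rw [(hεiff (N+k)).mpr he, (hεiff (N+l)).mpr (hbool.mp he)]
    · rw [hεodd' (N+k) he, hεodd' (N+l) (fun hh => he (hbool.mpr hh))]
  refine ⟨N+k, l-k, by omega, ?_⟩
  have hNl : N + k + (l - k) = N + l := by omega
  rw [hNl]
  have h1 := I2 (N+k)
  have h2' := I2 (N+l)
  rw [hUeq, hVeq, hεeq] at h1
  have hz : 2 * iota (U (N+l)) * (A (N+k) - A (N+l)) = 0 := by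
    linear_combination h1 - h2'
  have hfin := (mul_eq_zero.mp hz).resolve_left (hden (N+l))
  exact sub_eq_zero.mp hfin
end

section
/- Let O be a discrete valuation ring with fraction field K and residue field k of characteristic different from 2. Let α ∈ K((T)) be a Laurent series all of whose coefficients lie in O, and let γ ∈ k((T)) be its coefficientwise reduction. Let p, q ∈ O[X] be polynomials whose reductions p̄, q̄ ∈ k[X] satisfy q̄ ≠ 0, and suppose (p, q) is a convergent of α, i.e. orderTop(ι p − α·ι q) > deg q. Then orderTop(ι p̄ − γ·ι q̄) > deg q ≥ deg q̄; in particular (p̄, q̄) is a convergent of γ. -/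
open Polynomial

lemma iota_monomial {K : Type*} [Field K] (i : ℕ) (a : K) :
    iota (Polynomial.monomial i a) = HahnSeries.single (-(i : ℤ)) a := by
  unfold iota
  rw [coe_eval₂RingHom, Polynomial.eval₂_monomial, HahnSeries.single_pow, one_pow]
  rw [show (i • (-1 : ℤ)) = -(i : ℤ) by simp,
    show (HahnSeries.C a : LaurentSeries K) = HahnSeries.single 0 a from rfl,
    HahnSeries.single_mul_single, zero_add, mul_one]

lemma iota_eq_sum {K : Type*} [Field K] (f : Polynomial K) (N : ℕ) (hN : f.natDegree < N) :
    iota f = ∑ i ∈ Finset.range N, HahnSeries.single (-(i : ℤ)) (f.coeff i) := by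
  conv_lhs => rw [f.as_sum_range' N hN]
  rw [map_sum]
  exact Finset.sum_congr rfl fun i _ => iota_monomial i (f.coeff i)

/-- Generic coefficient computation. -/
lemma hahn_coeff_sum {Γ R α : Type*} [PartialOrder Γ] [AddCommMonoid R]
    (s : Finset α) (f : α → HahnSeries Γ R) (n : Γ) :
    (∑ i ∈ s, f i).coeff n = ∑ i ∈ s, (f i).coeff n :=
  map_sum (HahnSeries.coeff.addMonoidHom n) f s

lemma coeff_key {O F : Type*} [CommRing O] [Field F] (φ : O →+* F)
    (β : LaurentSeries F) (c : ℤ → O) (hβ : ∀ n, β.coeff n = φ (c n))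
    (f g : Polynomial O) (n : ℤ) :
    (iota (f.map φ) - β * iota (g.map φ)).coeff n =
    φ ((∑ i ∈ Finset.range (f.natDegree + 1), if n = -(i : ℤ) then f.coeff i else 0)
      - ∑ i ∈ Finset.range (g.natDegree + 1), c (n + i) * g.coeff i) := by
  have hf : (f.map φ).natDegree < f.natDegree + 1 :=
    lt_of_le_of_lt natDegree_map_le (Nat.lt_succ_self _)
  have hg : (g.map φ).natDegree < g.natDegree + 1 :=
    lt_of_le_of_lt natDegree_map_le (Nat.lt_succ_self _)
  rw [iota_eq_sum _ _ hf, iota_eq_sum _ _ hg, Finset.mul_sum,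
    HahnSeries.coeff_sub, map_sub, map_sum]
  congr 1
  · rw [hahn_coeff_sum]
    refine Finset.sum_congr rfl fun i _ => ?_
    simp only [HahnSeries.coeff_single, Polynomial.coeff_map]
    split <;> simp
  · rw [hahn_coeff_sum, map_sum]
    refine Finset.sum_congr rfl fun i _ => ?_
    have hn : n = (n + i) + (-(i : ℤ)) := by ring
    rw [hn, HahnSeries.coeff_mul_single_add, ← hn, hβ, Polynomial.coeff_map, map_mul]

/-- Convergents remain convergents after reduction: if `α` has coefficients in a DVR `O`
(with residue characteristic ≠ 2), `γ` is its coefficientwise reduction, `p, q ∈ O[X]` with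
`q̄ ≠ 0`, and `(p, q)` is a convergent of `α`, then `(p̄, q̄)` is a convergent of `γ` with
`orderTop (ι p̄ - γ ι q̄) > deg q ≥ deg q̄`. -/
theorem convergent_reduction {O : Type*} [CommRing O] [IsDomain O] [IsDiscreteValuationRing O]
    (h2 : (2 : IsLocalRing.ResidueField O) ≠ 0)
    (α : LaurentSeries (FractionRing O))
    (γ : LaurentSeries (IsLocalRing.ResidueField O))
    (c : ℤ → O)
    (hαc : ∀ n : ℤ, α.coeff n = algebraMap O (FractionRing O) (c n))
    (hγc : ∀ n : ℤ, γ.coeff n = IsLocalRing.residue O (c n))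
    (p q : Polynomial O)
    (hqbar : q.map (IsLocalRing.residue O) ≠ 0)
    (hconv : (q.natDegree : WithTop ℤ) <
      (iota (p.map (algebraMap O (FractionRing O))) -
        α * iota (q.map (algebraMap O (FractionRing O)))).orderTop) :
    (q.natDegree : WithTop ℤ) <
      (iota (p.map (IsLocalRing.residue O)) -
        γ * iota (q.map (IsLocalRing.residue O))).orderTop ∧
    (q.map (IsLocalRing.residue O)).natDegree ≤ q.natDegree := by
  have hEzero : ∀ n : ℤ, n ≤ (q.natDegree : ℤ) →
      (∑ i ∈ Finset.range (p.natDegree + 1), if n = -(i : ℤ) then p.coeff i else 0)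
        - ∑ i ∈ Finset.range (q.natDegree + 1), c (n + i) * q.coeff i = 0 := by
    intro n hn
    have hlt : (n : WithTop ℤ) <
        (iota (p.map (algebraMap O (FractionRing O))) -
          α * iota (q.map (algebraMap O (FractionRing O)))).orderTop :=
      lt_of_le_of_lt (by exact_mod_cast hn) hconv
    have h0 := HahnSeries.coeff_eq_zero_of_lt_orderTop hlt
    rw [coeff_key (algebraMap O (FractionRing O)) α c hαc p q n] at h0
    exact IsFractionRing.injective O (FractionRing O) (by rw [h0, map_zero])
  obtain ⟨x, hx⟩ : ∃ x, x = iota (p.map (IsLocalRing.residue O)) -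
      γ * iota (q.map (IsLocalRing.residue O)) := ⟨_, rfl⟩
  rw [← hx]
  have hxcoeff : ∀ n : ℤ, n ≤ (q.natDegree : ℤ) → x.coeff n = 0 := by
    intro n hn
    rw [hx, coeff_key (IsLocalRing.residue O) γ c hγc p q n, hEzero n hn, map_zero]
  constructor
  · by_contra hcon
    push_neg at hcon
    have hxne : x ≠ 0 := by
      intro h
      rw [h, HahnSeries.orderTop_zero] at hcon
      simp [h] at hcon
    rw [← HahnSeries.order_eq_orderTop_of_ne_zero hxne] at hcon
    have hord : x.order ≤ (q.natDegree : ℤ) := by exact_mod_cast hcon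
    exact hxne (HahnSeries.coeff_order_eq_zero.mp (hxcoeff x.order hord))
  · exact natDegree_map_le
end
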